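/- Let H₁ and H₂ be Hermitian matrices each having 0 as smallest eigenvalue, with unit ground states ψ₁ (H₁ψ₁ = 0) and ψ₂ (H₂ψ₂ = 0). Suppose the spectral gap of H₁ (its smallest nonzero eigenvalue) is at least Δ > 0 and ‖H₁ − H₂‖ ≤ ε (operator norm). Then |⟨ψ₂|ψ₁⟩| ≥ 1 − ε²/Δ². -/

import Mathlib

/-- Let `H₁, H₂` be Hermitian with `H₁ψ₁ = 0`, `H₂ψ₂ = 0` for unit vectors
`ψ₁, ψ₂`, spectral gap `Δ > 0` of `H₁` (i.e. `‖H₁ v‖ ≥ Δ‖v‖` on the orthogonal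
complement of `ψ₁`), and `‖H₁ − H₂‖ ≤ ε` in operator norm. Then
`|⟨ψ₂|ψ₁⟩| ≥ 1 − ε²/Δ²`. -/
theorem stmt_10 {N : ℕ} (H₁ H₂ : Matrix (Fin N) (Fin N) ℂ)
    (hH₁ : H₁.IsHermitian) (hH₂ : H₂.IsHermitian)
    (ψ₁ ψ₂ : Fin N → ℂ)
    (hψ₁unit : ∑ x, Complex.normSq (ψ₁ x) = 1)
    (hψ₂unit : ∑ x, Complex.normSq (ψ₂ x) = 1)
    (hg₁ : H₁.mulVec ψ₁ = 0) (hg₂ : H₂.mulVec ψ₂ = 0)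
    (Δ ε : ℝ) (hΔ : 0 < Δ) (hε : 0 ≤ ε)
    (hgap : ∀ v : Fin N → ℂ, (∑ x, (starRingEnd ℂ) (ψ₁ x) * v x = 0) →
      Δ ^ 2 * ∑ x, Complex.normSq (v x) ≤ ∑ x, Complex.normSq ((H₁.mulVec v) x))
    (hclose : ∀ v : Fin N → ℂ,
      ∑ x, Complex.normSq (((H₁ - H₂).mulVec v) x) ≤ ε ^ 2 * ∑ x, Complex.normSq (v x)) :
    1 - ε ^ 2 / Δ ^ 2 ≤ ‖∑ x, (starRingEnd ℂ) (ψ₂ x) * ψ₁ x‖ := by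
  set c : ℂ := ∑ x, (starRingEnd ℂ) (ψ₁ x) * ψ₂ x with hc
  set v : Fin N → ℂ := ψ₂ - c • ψ₁ with hv
  -- norms as complex sums
  have h1c : (∑ x, (starRingEnd ℂ) (ψ₁ x) * ψ₁ x) = 1 := by
    have : (∑ x, (starRingEnd ℂ) (ψ₁ x) * ψ₁ x) = ((∑ x, Complex.normSq (ψ₁ x) : ℝ) : ℂ) := by
      push_cast
      exact Finset.sum_congr rfl fun x _ => (Complex.normSq_eq_conj_mul_self).symm
    rw [this, hψ₁unit]; norm_num
  have h2c : (∑ x, (starRingEnd ℂ) (ψ₂ x) * ψ₂ x) = 1 := by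
    have : (∑ x, (starRingEnd ℂ) (ψ₂ x) * ψ₂ x) = ((∑ x, Complex.normSq (ψ₂ x) : ℝ) : ℂ) := by
      push_cast
      exact Finset.sum_congr rfl fun x _ => (Complex.normSq_eq_conj_mul_self).symm
    rw [this, hψ₂unit]; norm_num
  have hconj : (∑ x, (starRingEnd ℂ) (ψ₂ x) * ψ₁ x) = (starRingEnd ℂ) c := by
    rw [hc, map_sum]
    exact Finset.sum_congr rfl fun x _ => by
      simp [mul_comm]
  -- v ⊥ ψ₁
  have hperp : ∑ x, (starRingEnd ℂ) (ψ₁ x) * v x = 0 := by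
    have : ∑ x, (starRingEnd ℂ) (ψ₁ x) * v x
        = (∑ x, (starRingEnd ℂ) (ψ₁ x) * ψ₂ x) - c * ∑ x, (starRingEnd ℂ) (ψ₁ x) * ψ₁ x := by
      rw [Finset.mul_sum, ← Finset.sum_sub_distrib]
      exact Finset.sum_congr rfl fun x _ => by simp [hv]; ring
    rw [this, h1c, ← hc]; ring
  -- ‖v‖² = 1 - normSq c
  have hvnorm : ∑ x, Complex.normSq (v x) = 1 - Complex.normSq c := by
    have key : ((∑ x, Complex.normSq (v x) : ℝ) : ℂ) = 1 - Complex.normSq c := by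
      push_cast
      have : (∑ x, (Complex.normSq (v x) : ℂ)) = ∑ x, (starRingEnd ℂ) (v x) * v x :=
        Finset.sum_congr rfl fun x _ => Complex.normSq_eq_conj_mul_self
      rw [this]
      have expand : (∑ x, (starRingEnd ℂ) (v x) * v x)
          = (∑ x, (starRingEnd ℂ) (ψ₂ x) * ψ₂ x)
            - c * ∑ x, (starRingEnd ℂ) (ψ₂ x) * ψ₁ x
            - (starRingEnd ℂ) c * ∑ x, (starRingEnd ℂ) (ψ₁ x) * ψ₂ x
            + (starRingEnd ℂ) c * c * ∑ x, (starRingEnd ℂ) (ψ₁ x) * ψ₁ x := by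
        simp only [Finset.mul_sum, ← Finset.sum_sub_distrib, ← Finset.sum_add_distrib]
        exact Finset.sum_congr rfl fun x _ => by simp [hv]; ring
      rw [expand, h2c, h1c, hconj, ← hc, Complex.normSq_eq_conj_mul_self]
      ring
    have := congrArg Complex.re key
    simpa using this
  -- H₁ v = (H₁ - H₂) ψ₂
  have hHv : H₁.mulVec v = (H₁ - H₂).mulVec ψ₂ := by
    rw [hv, Matrix.sub_mulVec, Matrix.mulVec_sub, Matrix.mulVec_smul, hg₁, hg₂]
    simp
  -- chain of inequalities
  have hchain : Δ ^ 2 * (1 - Complex.normSq c) ≤ ε ^ 2 := by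
    have g := hgap v hperp
    rw [hvnorm, hHv] at g
    have cl := hclose ψ₂
    rw [hψ₂unit, mul_one] at cl
    linarith
  have hle1 : Complex.normSq c ≤ 1 := by
    have : 0 ≤ ∑ x, Complex.normSq (v x) :=
      Finset.sum_nonneg fun x _ => Complex.normSq_nonneg _
    rw [hvnorm] at this; linarith
  have hΔ2 : (0:ℝ) < Δ ^ 2 := by positivity
  have h1 : 1 - ε ^ 2 / Δ ^ 2 ≤ Complex.normSq c := by
    have hd : ε ^ 2 / Δ ^ 2 * Δ ^ 2 = ε ^ 2 := div_mul_cancel₀ _ hΔ2.ne'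
    nlinarith [hchain]
  have habs : Complex.normSq c ≤ ‖c‖ := by
    rw [← Complex.sq_norm]
    nlinarith [norm_nonneg c, Complex.sq_norm c, hle1, Complex.normSq_nonneg c]
  rw [hconj, Complex.norm_conj]
  calc 1 - ε ^ 2 / Δ ^ 2 ≤ Complex.normSq c := h1
    _ ≤ ‖c‖ := habs
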